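/- Let a, p, k ∈ ℂ and let I ⊆ F be the two-sided ideal generated by the three elements x₂x₁ − x₁x₂ − a x₁², x₃x₁ − x₁x₃ − p x₁², and x₃x₂ − x₂x₃ + a x₁x₃ − p x₁x₂ + (k + pa) x₁². Then the images in F/I of the monomials x₁^{a₁} x₂^{a₂} x₃^{a₃}, over all a₁, a₂, a₃ ∈ ℕ, form a ℂ-basis of F/I. (This quotient is the Nichols algebra associated to the braiding of type R_{1,6} with t = 1; it has Gelfand–Kirillov dimension 3.) -/
import Mathlib

noncomputable section PBW

abbrev V : Type := (ℕ × ℕ × ℕ) →₀ ℂ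
def ee (t : ℕ × ℕ × ℕ) : V := Finsupp.single t 1
def sh (i : ℕ) : V →ₗ[ℂ] V :=
  Finsupp.lmapDomain ℂ ℂ (fun t => (t.1 + i, t.2.1, t.2.2))
lemma sh_ee (i : ℕ) (t : ℕ × ℕ × ℕ) : sh i (ee t) = ee (t.1 + i, t.2.1, t.2.2) := by
  simp [sh, ee, Finsupp.lmapDomain_apply, Finsupp.mapDomain_single]
lemma sh_sh (i i' : ℕ) (v : V) : sh i (sh i' v) = sh (i' + i) v := by
  have : (sh i).comp (sh i') = sh (i' + i) := by
    apply Finsupp.lhom_ext; intro t b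
    simp [sh, Finsupp.lmapDomain_apply, Finsupp.mapDomain_single, add_assoc]
  exact LinearMap.congr_fun this v
def LB (f : ℕ × ℕ × ℕ → V) : V →ₗ[ℂ] V := Finsupp.lift V ℂ _ f
lemma LB_ee (f : ℕ × ℕ × ℕ → V) (t : ℕ × ℕ × ℕ) : LB f (ee t) = f t := by
  simp [LB, ee, Finsupp.lift_apply, Finsupp.sum_single_index]

variable (a p k : ℂ)

def T1 : V →ₗ[ℂ] V := sh 1
def T2 : V →ₗ[ℂ] V :=
  LB (fun t => ee (t.1, t.2.1 + 1, t.2.2) + ((t.1 : ℂ) * a) • ee (t.1 + 1, t.2.1, t.2.2))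

def gf : ℕ → ℕ → ℕ → V
  | 0, i, l => ee (i, 0, l + 1) + ((i : ℂ) * p) • ee (i + 1, 0, l)
  | (j+1), i, l =>
      sh i (T2 a (gf j 0 l)) - a • sh (i+1) (gf j 0 l)
        + ((i : ℂ) * p + p) • ee (i+1, j+1, l) - (k + p * a) • ee (i+2, j, l)

def T3 : V →ₗ[ℂ] V := LB (fun t => gf a p k t.2.1 t.1 t.2.2)

lemma T1_ee (t : ℕ × ℕ × ℕ) : T1 (ee t) = ee (t.1 + 1, t.2.1, t.2.2) := sh_ee 1 t
lemma T2_ee (t : ℕ × ℕ × ℕ) :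
    T2 a (ee t) = ee (t.1, t.2.1 + 1, t.2.2) + ((t.1 : ℂ) * a) • ee (t.1 + 1, t.2.1, t.2.2) :=
  LB_ee _ t
lemma T3_ee (t : ℕ × ℕ × ℕ) : T3 a p k (ee t) = gf a p k t.2.1 t.1 t.2.2 := LB_ee _ t

/-- `gf j i l = sh i (gf j 0 l) + (i p) • ee (i+1,j,l)` -/
lemma gf_shift (j i l : ℕ) :
    gf a p k j i l = sh i (gf a p k j 0 l) + ((i : ℂ) * p) • ee (i + 1, j, l) := by
  cases j with
  | zero =>
      simp [gf, map_add, sh_ee, map_smul]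
  | succ j =>
      simp only [gf, map_add, map_sub, map_smul, sh_sh, sh_ee, add_comm, add_left_comm,
        add_assoc, zero_add, add_zero]
      push_cast
      module

/-- key commutation: `T2 ∘ sh i = sh i ∘ T2 + (i a) • sh (i+1)` -/
lemma T2_sh (i : ℕ) (v : V) :
    T2 a (sh i v) = sh i (T2 a v) + ((i : ℂ) * a) • sh (i+1) v := by
  have : (T2 a).comp (sh i) = sh i ∘ₗ (T2 a) + ((i : ℂ) * a) • sh (i+1) := by
    apply Finsupp.lhom_ext; intro t b
    have hb : (Finsupp.single t b : V) = b • ee t := by simp [ee, Finsupp.smul_single]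
    simp only [LinearMap.comp_apply, LinearMap.add_apply, LinearMap.smul_apply, hb,
      map_smul, sh_ee, T2_ee, map_add, add_comm, add_left_comm, add_assoc]
    push_cast
    module
  simpa using LinearMap.congr_fun this v


lemma E1 (t : ℕ × ℕ × ℕ) :
    T2 a (T1 (ee t)) = T1 (T2 a (ee t)) + a • (T1 (T1 (ee t))) := by
  simp only [T1_ee, T2_ee, map_add, map_smul, add_comm, add_left_comm, add_assoc]
  push_cast
  module

lemma E2 (t : ℕ × ℕ × ℕ) :
    T3 a p k (T1 (ee t)) = T1 (T3 a p k (ee t)) + p • (T1 (T1 (ee t))) := by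
  obtain ⟨i, j, l⟩ := t
  simp only [T1_ee, T3_ee]
  rw [gf_shift a p k j (i+1) l, gf_shift a p k j i l]
  simp only [T1, map_add, map_smul, sh_sh, sh_ee, add_comm, add_left_comm, add_assoc,
    zero_add, add_zero]
  push_cast
  module

lemma E3 (t : ℕ × ℕ × ℕ) :
    T3 a p k (T2 a (ee t)) + a • (T1 (T3 a p k (ee t))) + (k + p * a) • (T1 (T1 (ee t)))
      = T2 a (T3 a p k (ee t)) + p • (T1 (T2 a (ee t))) := by
  obtain ⟨i, j, l⟩ := t
  simp only [T1_ee, T2_ee, T3_ee, map_add, map_smul]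
  rw [show (gf a p k j (i+1) l) = _ from gf_shift a p k j (i+1) l,
      show (gf a p k j i l) = _ from gf_shift a p k j i l]
  show gf a p k (j+1) i l + _ + _ + _ = _
  rw [show gf a p k (j+1) i l = _ from rfl]
  simp only [gf, T1, map_add, map_sub, map_smul, sh_sh, sh_ee, T2_sh, T2_ee,
    add_comm, add_left_comm, add_assoc, zero_add, add_zero]
  push_cast
  module

end PBW


/-- The free associative unital `ℂ`-algebra on three generators. -/
abbrev F : Type := FreeAlgebra ℂ (Fin 3)

/-- The generators `x₁ = X 0`, `x₂ = X 1`, `x₃ = X 2`. -/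
noncomputable def X (i : Fin 3) : F := FreeAlgebra.ι ℂ i

/-- Generators: `x₂x₁ − x₁x₂ − a x₁²`, `x₃x₁ − x₁x₃ − p x₁²`, `x₃x₂ − x₂x₃ + a x₁x₃ − p x₁x₂ + (k + pa) x₁²`. -/
noncomputable def S (a p k : ℂ) : Set F :=
  {X 1 * X 0 - X 0 * X 1 - a • (X 0 * X 0),
   X 2 * X 0 - X 0 * X 2 - p • (X 0 * X 0),
   X 2 * X 1 - X 1 * X 2 + a • (X 0 * X 2) - p • (X 0 * X 1) + (k + p * a) • (X 0 * X 0)}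

/-- The relation whose two-sided-ideal closure is the ideal generated by `S`;
`RingQuot rel` is the quotient `F/I`. -/
def rel (a p k : ℂ) : F → F → Prop := fun x y => x ∈ S a p k ∧ y = 0


noncomputable section PBW2
variable (a p k : ℂ)

/-- the representation `F → End V` -/
def φ : F →ₐ[ℂ] Module.End ℂ V :=
  FreeAlgebra.lift ℂ ![T1, T2 a, T3 a p k]

lemma φ_X0 : φ a p k (X 0) = T1 := by simp [φ, X]
lemma φ_X1 : φ a p k (X 1) = T2 a := by simp [φ, X]
lemma φ_X2 : φ a p k (X 2) = T3 a p k := by simp [φ, X]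

lemma φ_rel : ∀ ⦃x y : F⦄, rel a p k x y → φ a p k x = φ a p k y := by
  rintro x y ⟨hx, rfl⟩
  rw [map_zero]
  rcases hx with h | h | h <;> subst h <;>
    simp only [map_sub, map_add, map_mul, map_smul, φ_X0, φ_X1, φ_X2] <;>
    · apply Finsupp.lhom_ext
      intro t b
      have hb : (Finsupp.single t b : V) = b • ee t := by simp [ee, Finsupp.smul_single]
      simp only [hb, LinearMap.sub_apply, LinearMap.add_apply, LinearMap.smul_apply,
        Module.End.mul_apply, LinearMap.zero_apply, map_smul]
      first
      | (rw [E1 a t]; module)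
      | (rw [E2 a p k t]; module)
      | (rw [show T3 a p k (T2 a (ee t)) =
            T2 a (T3 a p k (ee t)) + p • (T1 (T2 a (ee t)))
              - a • (T1 (T3 a p k (ee t))) - (k + p * a) • (T1 (T1 (ee t))) by
            have := E3 a p k t; linear_combination (norm := module) this]
         module)


lemma T1_pow (n : ℕ) (t : ℕ × ℕ × ℕ) :
    (T1 ^ n) (ee t) = ee (t.1 + n, t.2.1, t.2.2) := by
  induction n generalizing t with
  | zero => simp
  | succ n ih =>
      rw [pow_succ', Module.End.mul_apply, ih, T1_ee]
      simp [add_comm, add_left_comm, add_assoc]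

lemma T2_pow (n β γ : ℕ) : ((T2 a) ^ n) (ee (0, β, γ)) = ee (0, β + n, γ) := by
  induction n generalizing β with
  | zero => simp
  | succ n ih =>
      rw [pow_succ', Module.End.mul_apply, ih, T2_ee]
      simp only [Nat.cast_zero, zero_mul, zero_smul, add_zero, add_assoc]

lemma T3_pow (n γ : ℕ) : ((T3 a p k) ^ n) (ee (0, 0, γ)) = ee (0, 0, γ + n) := by
  induction n generalizing γ with
  | zero => simp
  | succ n ih =>
      rw [pow_succ', Module.End.mul_apply, ih, T3_ee]
      show gf a p k 0 0 (γ + n) = _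
      simp only [gf, Nat.cast_zero, zero_mul, zero_smul, add_zero, add_assoc]

lemma φ_mono (e : ℕ × ℕ × ℕ) :
    φ a p k (X 0 ^ e.1 * X 1 ^ e.2.1 * X 2 ^ e.2.2) (ee (0, 0, 0)) = ee e := by
  obtain ⟨i, j, l⟩ := e
  simp only [map_mul, map_pow, φ_X0, φ_X1, φ_X2, Module.End.mul_apply]
  rw [T3_pow, T2_pow, T1_pow]
  simp


def ψ : RingQuot (rel a p k) →ₐ[ℂ] Module.End ℂ V :=
  RingQuot.liftAlgHom ℂ ⟨φ a p k, φ_rel a p k⟩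

lemma indep : LinearIndependent ℂ (fun e : ℕ × ℕ × ℕ =>
    RingQuot.mkAlgHom ℂ (rel a p k) (X 0 ^ e.1 * X 1 ^ e.2.1 * X 2 ^ e.2.2)) := by
  let Φ : RingQuot (rel a p k) →ₗ[ℂ] V :=
    (LinearMap.applyₗ (ee (0,0,0))).comp (ψ a p k).toLinearMap
  apply LinearIndependent.of_comp Φ
  have hcomp : (Φ ∘ fun e : ℕ × ℕ × ℕ =>
      RingQuot.mkAlgHom ℂ (rel a p k) (X 0 ^ e.1 * X 1 ^ e.2.1 * X 2 ^ e.2.2))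
      = fun e => Finsupp.single e (1 : ℂ) := by
    funext e
    show (ψ a p k) (RingQuot.mkAlgHom ℂ (rel a p k) _) (ee (0,0,0)) = _
    rw [ψ, RingQuot.liftAlgHom_mkAlgHom_apply, φ_mono]
    rfl
  rw [hcomp]
  have := (Finsupp.basisSingleOne (R := ℂ) (ι := ℕ × ℕ × ℕ)).linearIndependent
  rwa [Finsupp.coe_basisSingleOne] at this


/-! ### spanning -/

def yg (g : Fin 3) : RingQuot (rel a p k) := RingQuot.mkAlgHom ℂ (rel a p k) (X g)

def famq (e : ℕ × ℕ × ℕ) : RingQuot (rel a p k) :=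
  RingQuot.mkAlgHom ℂ (rel a p k) (X 0 ^ e.1 * X 1 ^ e.2.1 * X 2 ^ e.2.2)

def MM : Submodule ℂ (RingQuot (rel a p k)) := Submodule.span ℂ (Set.range (famq a p k))

lemma famq_eq (e : ℕ × ℕ × ℕ) :
    famq a p k e = yg a p k 0 ^ e.1 * yg a p k 1 ^ e.2.1 * yg a p k 2 ^ e.2.2 := by
  simp [famq, yg, map_mul, map_pow]

lemma memMM (e : ℕ × ℕ × ℕ) : famq a p k e ∈ MM a p k :=
  Submodule.subset_span ⟨e, rfl⟩

lemma memMM' (i j l : ℕ) :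
    yg a p k 0 ^ i * yg a p k 1 ^ j * yg a p k 2 ^ l ∈ MM a p k := by
  rw [← famq_eq a p k (i, j, l)]; exact memMM a p k _

lemma hq1 : yg a p k 1 * yg a p k 0
    = yg a p k 0 * yg a p k 1 + a • (yg a p k 0 * yg a p k 0) := by
  have h := RingQuot.mkAlgHom_rel ℂ
    (show rel a p k (X 1 * X 0 - X 0 * X 1 - a • (X 0 * X 0)) 0 from
      ⟨Set.mem_insert _ _, rfl⟩)
  rw [map_zero, map_sub, map_sub, map_smul, map_mul, map_mul, map_mul] at h
  rw [← sub_eq_zero]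
  rw [show yg a p k 1 * yg a p k 0
      - (yg a p k 0 * yg a p k 1 + a • (yg a p k 0 * yg a p k 0))
      = yg a p k 1 * yg a p k 0 - yg a p k 0 * yg a p k 1
        - a • (yg a p k 0 * yg a p k 0) from by module]
  exact h

lemma hq2 : yg a p k 2 * yg a p k 0
    = yg a p k 0 * yg a p k 2 + p • (yg a p k 0 * yg a p k 0) := by
  have h := RingQuot.mkAlgHom_rel ℂ
    (show rel a p k (X 2 * X 0 - X 0 * X 2 - p • (X 0 * X 0)) 0 from
      ⟨Set.mem_insert_of_mem _ (Set.mem_insert _ _), rfl⟩)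
  rw [map_zero, map_sub, map_sub, map_smul, map_mul, map_mul, map_mul] at h
  rw [← sub_eq_zero]
  rw [show yg a p k 2 * yg a p k 0
      - (yg a p k 0 * yg a p k 2 + p • (yg a p k 0 * yg a p k 0))
      = yg a p k 2 * yg a p k 0 - yg a p k 0 * yg a p k 2
        - p • (yg a p k 0 * yg a p k 0) from by module]
  exact h

lemma hq3 : yg a p k 2 * yg a p k 1
    = yg a p k 1 * yg a p k 2 - a • (yg a p k 0 * yg a p k 2)
      + p • (yg a p k 0 * yg a p k 1)
      - (k + p * a) • (yg a p k 0 * yg a p k 0) := by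
  have h := RingQuot.mkAlgHom_rel ℂ
    (show rel a p k (X 2 * X 1 - X 1 * X 2 + a • (X 0 * X 2) - p • (X 0 * X 1)
        + (k + p * a) • (X 0 * X 0)) 0 from
      ⟨Set.mem_insert_of_mem _ (Set.mem_insert_of_mem _ rfl), rfl⟩)
  rw [map_zero, map_add, map_sub, map_add, map_sub, map_smul, map_smul, map_smul,
    map_mul, map_mul, map_mul, map_mul, map_mul] at h
  rw [← sub_eq_zero]
  rw [show yg a p k 2 * yg a p k 1
      - (yg a p k 1 * yg a p k 2 - a • (yg a p k 0 * yg a p k 2)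
        + p • (yg a p k 0 * yg a p k 1)
        - (k + p * a) • (yg a p k 0 * yg a p k 0))
      = yg a p k 2 * yg a p k 1 - yg a p k 1 * yg a p k 2
        + a • (yg a p k 0 * yg a p k 2) - p • (yg a p k 0 * yg a p k 1)
        + (k + p * a) • (yg a p k 0 * yg a p k 0) from by module]
  exact h


lemma LemA (i : ℕ) : yg a p k 1 * yg a p k 0 ^ i
    = yg a p k 0 ^ i * yg a p k 1 + ((i : ℂ) * a) • (yg a p k 0 ^ (i + 1)) := by
  induction i with
  | zero => simp
  | succ i ih =>
      calc yg a p k 1 * yg a p k 0 ^ (i + 1)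
          = (yg a p k 1 * yg a p k 0 ^ i) * yg a p k 0 := by rw [pow_succ, ← mul_assoc]
        _ = (yg a p k 0 ^ i * yg a p k 1) * yg a p k 0
            + ((i : ℂ) * a) • (yg a p k 0 ^ (i + 1) * yg a p k 0) := by
            rw [ih, add_mul, smul_mul_assoc]
        _ = yg a p k 0 ^ i * (yg a p k 0 * yg a p k 1 + a • (yg a p k 0 * yg a p k 0))
            + ((i : ℂ) * a) • (yg a p k 0 ^ (i + 2)) := by
            rw [mul_assoc, hq1, ← pow_succ]
        _ = yg a p k 0 ^ (i + 1) * yg a p k 1 + (((i : ℕ) + 1 : ℂ) * a) • (yg a p k 0 ^ (i + 2)) := by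
            rw [mul_add, mul_smul_comm, ← mul_assoc, ← pow_succ, ← mul_assoc, ← pow_succ, ← pow_succ]
            module
        _ = yg a p k 0 ^ (i + 1) * yg a p k 1 + (((i + 1 : ℕ) : ℂ) * a) • (yg a p k 0 ^ (i + 1 + 1)) := by
            push_cast; ring_nf

lemma LemB (i : ℕ) : yg a p k 2 * yg a p k 0 ^ i
    = yg a p k 0 ^ i * yg a p k 2 + ((i : ℂ) * p) • (yg a p k 0 ^ (i + 1)) := by
  induction i with
  | zero => simp
  | succ i ih =>
      calc yg a p k 2 * yg a p k 0 ^ (i + 1)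
          = (yg a p k 2 * yg a p k 0 ^ i) * yg a p k 0 := by rw [pow_succ, ← mul_assoc]
        _ = (yg a p k 0 ^ i * yg a p k 2) * yg a p k 0
            + ((i : ℂ) * p) • (yg a p k 0 ^ (i + 1) * yg a p k 0) := by
            rw [ih, add_mul, smul_mul_assoc]
        _ = yg a p k 0 ^ i * (yg a p k 0 * yg a p k 2 + p • (yg a p k 0 * yg a p k 0))
            + ((i : ℂ) * p) • (yg a p k 0 ^ (i + 2)) := by
            rw [mul_assoc, hq2, ← pow_succ]
        _ = yg a p k 0 ^ (i + 1) * yg a p k 2 + (((i : ℕ) + 1 : ℂ) * p) • (yg a p k 0 ^ (i + 2)) := by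
            rw [mul_add, mul_smul_comm, ← mul_assoc, ← pow_succ, ← mul_assoc, ← pow_succ, ← pow_succ]
            module
        _ = yg a p k 0 ^ (i + 1) * yg a p k 2 + (((i + 1 : ℕ) : ℂ) * p) • (yg a p k 0 ^ (i + 1 + 1)) := by
            push_cast; ring_nf

lemma closureMM (u : RingQuot (rel a p k)) (h : ∀ e, u * famq a p k e ∈ MM a p k) :
    ∀ m ∈ MM a p k, u * m ∈ MM a p k := by
  intro m hm
  have hsub : Set.range (famq a p k) ⊆
      ↑((MM a p k).comap (LinearMap.mulLeft ℂ u)) := by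
    rintro _ ⟨e, rfl⟩; exact h e
  exact Submodule.span_le.2 hsub hm

lemma c0 : ∀ m ∈ MM a p k, yg a p k 0 * m ∈ MM a p k := by
  apply closureMM
  rintro ⟨i, j, l⟩
  rw [famq_eq]
  rw [show yg a p k 0 * (yg a p k 0 ^ i * yg a p k 1 ^ j * yg a p k 2 ^ l)
      = yg a p k 0 ^ (i + 1) * yg a p k 1 ^ j * yg a p k 2 ^ l from by
    rw [← mul_assoc, ← mul_assoc, ← pow_succ']]
  exact memMM' a p k _ _ _

lemma c0pow (n : ℕ) : ∀ m ∈ MM a p k, yg a p k 0 ^ n * m ∈ MM a p k := by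
  induction n with
  | zero => intro m hm; simpa using hm
  | succ n ih =>
      intro m hm
      rw [pow_succ', mul_assoc]
      exact c0 a p k _ (ih m hm)

lemma c1 : ∀ m ∈ MM a p k, yg a p k 1 * m ∈ MM a p k := by
  apply closureMM
  rintro ⟨i, j, l⟩
  rw [famq_eq]
  rw [show yg a p k 1 * (yg a p k 0 ^ i * yg a p k 1 ^ j * yg a p k 2 ^ l)
      = (yg a p k 1 * yg a p k 0 ^ i) * yg a p k 1 ^ j * yg a p k 2 ^ l from by
    rw [← mul_assoc, ← mul_assoc]]
  rw [LemA, add_mul, add_mul, smul_mul_assoc, smul_mul_assoc]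
  rw [show yg a p k 0 ^ i * yg a p k 1 * yg a p k 1 ^ j
      = yg a p k 0 ^ i * yg a p k 1 ^ (j + 1) from by
    rw [mul_assoc, ← pow_succ']]
  exact add_mem (memMM' a p k _ _ _) (Submodule.smul_mem _ _ (memMM' a p k _ _ _))


lemma KC (j l : ℕ) : yg a p k 2 * (yg a p k 1 ^ j * yg a p k 2 ^ l) ∈ MM a p k := by
  induction j generalizing l with
  | zero =>
      rw [pow_zero, one_mul, ← pow_succ']
      simpa using memMM' a p k 0 0 (l + 1)
  | succ j ih =>
      have hZ : yg a p k 1 ^ j * yg a p k 2 ^ l ∈ MM a p k := by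
        simpa using memMM' a p k 0 j l
      rw [pow_succ', mul_assoc, ← mul_assoc, hq3, sub_mul, add_mul, sub_mul,
        smul_mul_assoc, smul_mul_assoc, smul_mul_assoc, mul_assoc, mul_assoc,
        mul_assoc, mul_assoc]
      exact sub_mem
        (add_mem
          (sub_mem (c1 a p k _ (ih l)) (Submodule.smul_mem _ _ (c0 a p k _ (ih l))))
          (Submodule.smul_mem _ _ (c0 a p k _ (c1 a p k _ hZ))))
        (Submodule.smul_mem _ _ (c0 a p k _ (c0 a p k _ hZ)))

lemma c2 : ∀ m ∈ MM a p k, yg a p k 2 * m ∈ MM a p k := by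
  apply closureMM
  rintro ⟨i, j, l⟩
  rw [famq_eq, mul_assoc, ← mul_assoc, LemB, add_mul, smul_mul_assoc, mul_assoc]
  have h2 : yg a p k 0 ^ (i + 1) * (yg a p k 1 ^ j * yg a p k 2 ^ l) ∈ MM a p k := by
    rw [← mul_assoc]; exact memMM' a p k _ _ _
  exact add_mem (c0pow a p k i _ (KC a p k j l)) (Submodule.smul_mem _ _ h2)

lemma spanMM : MM a p k = ⊤ := by
  rw [eq_top_iff]
  rintro z -
  obtain ⟨x, rfl⟩ := RingQuot.mkAlgHom_surjective ℂ (rel a p k) z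
  have h1 : (1 : RingQuot (rel a p k)) ∈ MM a p k := by simpa using memMM' a p k 0 0 0
  have main : ∀ x : F, ∀ m ∈ MM a p k,
      RingQuot.mkAlgHom ℂ (rel a p k) x * m ∈ MM a p k := by
    intro x
    induction x using FreeAlgebra.induction with
    | grade0 r =>
        intro m hm
        rw [show RingQuot.mkAlgHom ℂ (rel a p k) (algebraMap ℂ F r) * m = r • m from by
          rw [AlgHom.commutes, ← Algebra.smul_def]]
        exact Submodule.smul_mem _ _ hm
    | grade1 g =>
        fin_cases g
        · exact c0 a p k
        · exact c1 a p k
        · exact c2 a p k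
    | mul u v hu hv =>
        intro m hm
        rw [map_mul, mul_assoc]
        exact hu _ (hv m hm)
    | add u v hu hv =>
        intro m hm
        rw [map_add, add_mul]
        exact add_mem (hu m hm) (hv m hm)
  simpa using main x 1 h1

end PBW2

/-- the images in `F/I` of the monomials `x₁^{a₁} x₂^{a₂} x₃^{a₃}` form a `ℂ`-basis. -/
theorem basis_R16_t_one (a p k : ℂ) :
    LinearIndependent ℂ (fun e : ℕ × ℕ × ℕ =>
      RingQuot.mkAlgHom ℂ (rel a p k) (X 0 ^ e.1 * X 1 ^ e.2.1 * X 2 ^ e.2.2)) ∧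
    Submodule.span ℂ (Set.range (fun e : ℕ × ℕ × ℕ =>
      RingQuot.mkAlgHom ℂ (rel a p k) (X 0 ^ e.1 * X 1 ^ e.2.1 * X 2 ^ e.2.2))) = ⊤ := by
  exact ⟨indep a p k, spanMM a p k⟩
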